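/- For all x > 0, |1/V_0(x) − x| < 1/(2x). -/

import Mathlib

open MeasureTheory Set Filter Real

noncomputable def V0 (x : ℝ) : ℝ := 2 * Real.exp (x^2) * ∫ t in Set.Ioi x, Real.exp (-t^2)

lemma hasDerivAt_expnegsq (t : ℝ) :
    HasDerivAt (fun t : ℝ => Real.exp (-t^2)) (Real.exp (-t^2) * (-2*t)) t := by
  have h : HasDerivAt (fun t : ℝ => -t^2) (-(2*t)) t := by
    exact (by simpa using hasDerivAt_pow 2 t : HasDerivAt (fun t : ℝ => t^2) (2*t) t).neg
  simpa using h.exp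

lemma integrableOn_expnegsq (x : ℝ) :
    IntegrableOn (fun t : ℝ => Real.exp (-t^2)) (Set.Ioi x) := by
  have := (integrable_exp_neg_mul_sq (b := 1) one_pos).integrableOn (s := Set.Ioi x)
  simpa using this

lemma tendsto_expnegsq : Tendsto (fun t : ℝ => Real.exp (-t^2)) atTop (nhds 0) := by
  have h : Tendsto (fun t : ℝ => -t^2) atTop atBot := by
    apply tendsto_neg_atBot_iff.mpr
    exact tendsto_pow_atTop (by norm_num)
  exact Real.tendsto_exp_atBot.comp h

/-- Upper bound: ∫_x^∞ e^{-t²} ≤ e^{-x²}/(2x) for x > 0. -/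
lemma integral_le (x : ℝ) (hx : 0 < x) :
    (∫ t in Set.Ioi x, Real.exp (-t^2)) ≤ Real.exp (-x^2) / (2*x) := by
  set g := fun t : ℝ => -Real.exp (-t^2) / (2*t) with hg
  set g' := fun t : ℝ => Real.exp (-t^2) + Real.exp (-t^2) / (2*t^2) with hg'
  have hderiv : ∀ t ∈ Set.Ici x, HasDerivAt g (g' t) t := by
    intro t ht
    have htpos : 0 < t := lt_of_lt_of_le hx ht
    have h1 : HasDerivAt (fun t : ℝ => -Real.exp (-t^2)) (-(Real.exp (-t^2) * (-2*t))) t :=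
      (hasDerivAt_expnegsq t).neg
    have h2 : HasDerivAt (fun t : ℝ => 2*t) 2 t := by
      simpa using (hasDerivAt_id t).const_mul 2
    have : HasDerivAt g _ t := h1.div h2 (by positivity)
    convert this using 1
    simp only [hg']
    field_simp
    ring
  have hint : IntegrableOn g' (Set.Ioi x) := by
    apply (((integrableOn_expnegsq x).const_mul (1 + 1/(2*x^2)))).mono'
    · apply Measurable.aestronglyMeasurable
      fun_prop
    · filter_upwards [ae_restrict_mem measurableSet_Ioi] with t ht
      have htx : x < t := ht
      have htpos : 0 < t := hx.trans htx
      have h1 : Real.exp (-t^2) / (2*t^2) ≤ Real.exp (-t^2) / (2*x^2) := by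
        apply div_le_div_of_nonneg_left (Real.exp_pos _).le (by positivity)
        nlinarith
      have h0 : 0 ≤ g' t := by positivity
      rw [Real.norm_eq_abs, abs_of_nonneg h0]
      simp only [hg']
      calc Real.exp (-t^2) + Real.exp (-t^2) / (2*t^2)
          ≤ Real.exp (-t^2) + Real.exp (-t^2) / (2*x^2) := by linarith
        _ = (1 + 1/(2*x^2)) * Real.exp (-t^2) := by ring
  have htend : Tendsto g atTop (nhds 0) := by
    apply squeeze_zero_norm' _ tendsto_expnegsq
    filter_upwards [eventually_ge_atTop (1:ℝ)] with t ht
    have htpos : (0:ℝ) < t := by linarith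
    simp only [hg, Real.norm_eq_abs, abs_div, abs_neg, abs_of_nonneg (Real.exp_pos (-t^2)).le,
      abs_of_nonneg (by linarith : (0:ℝ) ≤ 2*t)]
    rw [div_le_iff₀ (by linarith)]
    nlinarith [Real.exp_pos (-t^2)]
  have key : ∫ t in Set.Ioi x, g' t = 0 - g x :=
    integral_Ioi_of_hasDerivAt_of_tendsto' (fun t ht => hderiv t ht) hint htend
  have hmono : (∫ t in Set.Ioi x, Real.exp (-t^2)) ≤ ∫ t in Set.Ioi x, g' t := by
    apply setIntegral_mono_on (integrableOn_expnegsq x) hint measurableSet_Ioi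
    intro t ht
    have htpos : 0 < t := hx.trans ht
    have hq : 0 ≤ Real.exp (-t^2) / (2*t^2) := by positivity
    simp only [hg']
    linarith
  rw [key] at hmono
  have hgx : (0:ℝ) - g x = Real.exp (-x^2) / (2*x) := by
    simp only [hg]; ring
  linarith [hgx ▸ hmono]

/-- Lower bound: ∫_x^∞ e^{-t²} > x e^{-x²}/(2x²+1). -/
lemma integral_gt (x : ℝ) (hx : 0 < x) :
    x * Real.exp (-x^2) / (2*x^2+1) < ∫ t in Set.Ioi x, Real.exp (-t^2) := by
  set g := fun t : ℝ => -(t * Real.exp (-t^2)) / (2*t^2+1) with hg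
  set g' := fun t : ℝ => Real.exp (-t^2) * (4*t^4+4*t^2-1) / (2*t^2+1)^2 with hg'
  have hden : ∀ t : ℝ, (0:ℝ) < 2*t^2+1 := fun t => by positivity
  have hderiv : ∀ t : ℝ, HasDerivAt g (g' t) t := by
    intro t
    have h1 : HasDerivAt (fun t : ℝ => -(t * Real.exp (-t^2)))
        (-(1 * Real.exp (-t^2) + t * (Real.exp (-t^2) * (-2*t)))) t :=
      ((hasDerivAt_id t).mul (hasDerivAt_expnegsq t)).neg
    have h2 : HasDerivAt (fun t : ℝ => 2*t^2+1) (2*(2*t)) t := by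
      simpa using (((hasDerivAt_pow 2 t).const_mul 2).add_const 1)
    have : HasDerivAt g _ t := h1.div h2 (ne_of_gt (hden t))
    convert this using 1
    simp only [hg']
    field_simp
    ring
  have habs : ∀ t : ℝ, |g' t| ≤ Real.exp (-t^2) := by
    intro t
    simp only [hg']
    rw [abs_div, abs_of_nonneg (by positivity : (0:ℝ) ≤ (2*t^2+1)^2), abs_mul,
      abs_of_nonneg (Real.exp_pos _).le, div_le_iff₀ (by positivity)]
    have h : |4*t^4+4*t^2-1| ≤ (2*t^2+1)^2 := by
      rw [abs_le]
      constructor <;> nlinarith [sq_nonneg t, sq_nonneg (t^2)]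
    calc Real.exp (-t^2) * |4*t^4+4*t^2-1| ≤ Real.exp (-t^2) * (2*t^2+1)^2 := by gcongr
      _ = Real.exp (-t^2) * (2*t^2+1)^2 := rfl
  have hint : IntegrableOn g' (Set.Ioi x) := by
    apply (integrableOn_expnegsq x).mono'
    · apply Measurable.aestronglyMeasurable
      fun_prop
    · filter_upwards [] with t
      rw [Real.norm_eq_abs]
      exact habs t
  have htend : Tendsto g atTop (nhds 0) := by
    apply squeeze_zero_norm' _ tendsto_expnegsq
    filter_upwards [eventually_ge_atTop (0:ℝ)] with t ht
    simp only [hg, Real.norm_eq_abs, abs_div, abs_neg, abs_mul,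
      abs_of_nonneg (Real.exp_pos (-t^2)).le, abs_of_nonneg ht,
      abs_of_nonneg (hden t).le]
    rw [div_le_iff₀ (hden t)]
    nlinarith [Real.exp_pos (-t^2), sq_nonneg (4*t-1)]
  have key : ∫ t in Set.Ioi x, g' t = 0 - g x :=
    integral_Ioi_of_hasDerivAt_of_tendsto' (fun t _ => hderiv t) hint htend
  set h := fun t : ℝ => Real.exp (-t^2) * 2 / (2*t^2+1)^2 with hh
  have hdiff : ∀ t : ℝ, Real.exp (-t^2) - g' t = h t := by
    intro t
    simp only [hg', hh]
    field_simp
    ring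
  have hhpos : ∀ t : ℝ, 0 < h t := fun t => by simp only [hh]; positivity
  have hhcont : Continuous h := by
    have hc1 : Continuous fun t : ℝ => Real.exp (-t^2) * 2 := by continuity
    have hc2 : Continuous fun t : ℝ => ((2*t^2+1)^2 : ℝ) := by continuity
    exact hc1.div hc2 (fun t => by positivity)
  have hhint : IntegrableOn h (Set.Ioi x) := by
    have : IntegrableOn (fun t => Real.exp (-t^2) - g' t) (Set.Ioi x) :=
      (integrableOn_expnegsq x).sub hint
    exact this.congr_fun (fun t _ => hdiff t) measurableSet_Ioi
  have hsplit : (∫ t in Set.Ioi x, Real.exp (-t^2)) - (∫ t in Set.Ioi x, g' t)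
      = ∫ t in Set.Ioi x, h t := by
    rw [← integral_sub (integrableOn_expnegsq x) hint]
    exact setIntegral_congr_fun measurableSet_Ioi (fun t _ => hdiff t)
  have hpos : 0 < ∫ t in Set.Ioi x, h t := by
    have h1 : (∫ t in Set.Ioc x (x+1), h t) ≤ ∫ t in Set.Ioi x, h t := by
      apply setIntegral_mono_set hhint
      · filter_upwards [] with t
        exact (hhpos t).le
      · filter_upwards [] with t ht
        exact ht.1
    have h2 : 0 < ∫ t in Set.Ioc x (x+1), h t := by
      rw [← intervalIntegral.integral_of_le (by linarith : x ≤ x+1)]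
      exact intervalIntegral.intervalIntegral_pos_of_pos_on
        (hhcont.intervalIntegrable x (x+1)) (fun t _ => hhpos t) (by linarith)
    linarith
  rw [key] at hsplit
  have hgx : (0:ℝ) - g x = x * Real.exp (-x^2) / (2*x^2+1) := by
    simp only [hg]; ring
  linarith [hgx ▸ hsplit]

theorem nu_close_to_linear : ∀ x : ℝ, 0 < x → |1 / V0 x - x| < 1 / (2*x) := by
  intro x hx
  have hI_le := integral_le x hx
  have hI_gt := integral_gt x hx
  have hIpos : 0 < ∫ t in Set.Ioi x, Real.exp (-t^2) := by
    have : 0 < x * Real.exp (-x^2) / (2*x^2+1) := by positivity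
    linarith
  have hVpos : 0 < V0 x := by
    unfold V0
    positivity
  have hexp : Real.exp (x^2) * Real.exp (-x^2) = 1 := by
    rw [← Real.exp_add]; simp
  have hV_le : V0 x ≤ 1 / x := by
    unfold V0
    calc 2 * Real.exp (x^2) * ∫ t in Set.Ioi x, Real.exp (-t^2)
        ≤ 2 * Real.exp (x^2) * (Real.exp (-x^2) / (2*x)) := by
          gcongr
      _ = Real.exp (x^2) * Real.exp (-x^2) / x := by ring
      _ = 1 / x := by rw [hexp]
  have hV_gt : 2*x/(2*x^2+1) < V0 x := by
    unfold V0
    calc 2*x/(2*x^2+1) = Real.exp (x^2) * Real.exp (-x^2) * (2*x) / (2*x^2+1) := by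
          rw [hexp]; ring
      _ = 2 * Real.exp (x^2) * (x * Real.exp (-x^2) / (2*x^2+1)) := by ring
      _ < 2 * Real.exp (x^2) * ∫ t in Set.Ioi x, Real.exp (-t^2) := by
          gcongr

  have h1 : x ≤ 1 / V0 x := by
    rw [le_div_iff₀ hVpos]
    calc x * V0 x ≤ x * (1/x) := by gcongr
      _ = 1 := by field_simp
  have h2 : 1 / V0 x < x + 1/(2*x) := by
    have hq : 0 < 2*x/(2*x^2+1) := by positivity
    calc 1 / V0 x < 1 / (2*x/(2*x^2+1)) := one_div_lt_one_div_of_lt hq hV_gt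
      _ = (2*x^2+1)/(2*x) := by rw [one_div_div]
      _ = x + 1/(2*x) := by field_simp
  rw [abs_lt]
  constructor
  · have : 0 < 1/(2*x) := by positivity
    linarith
  · linarith
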